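/- Let n ∈ ℕ and p ∈ [1, ∞). Define a norm on ℂⁿ by ‖ξ‖_{F^p} = ‖u·d(ξ)·u⁻¹‖_{B(ℓᵖ(Fin n))}, where u is the n×n Fourier matrix and d(ξ) the diagonal matrix of ξ. Then the cyclic forward shift τ : ℂⁿ → ℂⁿ, τ(ξ)_j = ξ_{j−1 mod n}, is an isometry for this norm: ‖τ(ξ)‖_{F^p} = ‖ξ‖_{F^p} for all ξ ∈ ℂⁿ. -/

import Mathlib

open Real
open scoped BigOperators

/-- The `ℓᵖ` norm on `ι → ℂ` for a real exponent `p`. -/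
noncomputable def pNorm {ι : Type*} [Fintype ι] (p : ℝ) (ξ : ι → ℂ) : ℝ :=
  (∑ i, ‖ξ i‖ ^ p) ^ (1 / p)

/-- The operator norm of a matrix acting on `ℓᵖ(ι)`. -/
noncomputable def opNormLp {ι : Type*} [Fintype ι] (p : ℝ) (M : Matrix ι ι ℂ) : ℝ :=
  sInf {c : ℝ | 0 ≤ c ∧ ∀ ξ : ι → ℂ, pNorm p (M.mulVec ξ) ≤ c * pNorm p ξ}

/-- The primitive `n`-th root of unity `ω = exp(2πi/n)`. -/
noncomputable def dftOmega (n : ℕ) : ℂ := Complex.exp (2 * π * Complex.I / n)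

/-- The `n × n` Fourier matrix, with entries `u_{jk} = ω^{jk} / √n`. -/
noncomputable def dftMatrix (n : ℕ) [NeZero n] : Matrix (ZMod n) (ZMod n) ℂ :=
  Matrix.of fun j k => dftOmega n ^ (j.val * k.val) / (Real.sqrt n : ℂ)

/-- The norm `‖ξ‖_{F^p(ℤ_n)} = ‖u·d(ξ)·u⁻¹‖_{B(ℓᵖ)}` on `ℂⁿ`. -/
noncomputable def FpNorm (n : ℕ) [NeZero n] (p : ℝ) (ξ : ZMod n → ℂ) : ℝ :=
  opNormLp p (dftMatrix n * Matrix.diagonal ξ * (dftMatrix n)⁻¹)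

section Aux

lemma pNorm_diag_mulVec {ι : Type*} [Fintype ι] [DecidableEq ι] (p : ℝ) (d : ι → ℂ)
    (hd : ∀ i, ‖d i‖ = 1) (ξ : ι → ℂ) :
    pNorm p ((Matrix.diagonal d).mulVec ξ) = pNorm p ξ := by
  unfold pNorm
  congr 1
  refine Finset.sum_congr rfl fun i _ => ?_
  rw [Matrix.mulVec_diagonal, norm_mul, hd i, one_mul]

lemma opNormLp_conj {ι : Type*} [Fintype ι] [DecidableEq ι] (p : ℝ) (d e : ι → ℂ)
    (hd : ∀ i, ‖d i‖ = 1) (hde : ∀ i, d i * e i = 1) (M : Matrix ι ι ℂ) :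
    opNormLp p (Matrix.diagonal d * M * Matrix.diagonal e) = opNormLp p M := by
  have he : ∀ i, ‖e i‖ = 1 := by
    intro i
    have := congrArg norm (hde i)
    rwa [norm_mul, hd i, one_mul, norm_one] at this
  have hed : ∀ i, e i * d i = 1 := fun i => by rw [mul_comm]; exact hde i
  have hinv : ∀ ξ : ι → ℂ, (Matrix.diagonal d).mulVec ((Matrix.diagonal e).mulVec ξ) = ξ := by
    intro ξ; ext i
    simp [Matrix.mulVec_diagonal, ← mul_assoc, hde i]
  have hinv' : ∀ ξ : ι → ℂ, (Matrix.diagonal e).mulVec ((Matrix.diagonal d).mulVec ξ) = ξ := by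
    intro ξ; ext i
    simp [Matrix.mulVec_diagonal, ← mul_assoc, hed i]
  unfold opNormLp
  congr 1
  ext c
  simp only [Set.mem_setOf_eq]
  constructor
  · rintro ⟨hc, h⟩
    refine ⟨hc, fun ξ => ?_⟩
    have := h ((Matrix.diagonal d).mulVec ξ)
    rw [← Matrix.mulVec_mulVec, ← Matrix.mulVec_mulVec, hinv',
      pNorm_diag_mulVec p d hd] at this
    calc pNorm p (M.mulVec ξ)
        ≤ c * pNorm p ((Matrix.diagonal d).mulVec ξ) := this
      _ = c * pNorm p ξ := by rw [pNorm_diag_mulVec p d hd]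
  · rintro ⟨hc, h⟩
    refine ⟨hc, fun ξ => ?_⟩
    rw [← Matrix.mulVec_mulVec, ← Matrix.mulVec_mulVec, pNorm_diag_mulVec p d hd]
    calc pNorm p (M.mulVec ((Matrix.diagonal e).mulVec ξ))
        ≤ c * pNorm p ((Matrix.diagonal e).mulVec ξ) := h _
      _ = c * pNorm p ξ := by rw [pNorm_diag_mulVec p e he]

lemma dftOmega_pow_self (n : ℕ) [NeZero n] : dftOmega n ^ n = 1 := by
  rw [dftOmega, ← Complex.exp_nat_mul]
  have hn : (n : ℂ) ≠ 0 := Nat.cast_ne_zero.mpr (NeZero.ne n)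
  rw [show (n : ℂ) * (2 * ↑π * Complex.I / n) = 2 * ↑π * Complex.I by field_simp]
  exact Complex.exp_two_pi_mul_I

lemma dftOmega_pow_congr (n : ℕ) [NeZero n] {a b : ℕ} (h : a % n = b % n) :
    dftOmega n ^ a = dftOmega n ^ b := by
  have key : ∀ m : ℕ, dftOmega n ^ m = dftOmega n ^ (m % n) := by
    intro m
    conv_lhs => rw [← Nat.div_add_mod m n]
    rw [pow_add, pow_mul, dftOmega_pow_self, one_pow, one_mul]
  rw [key a, key b, h]

lemma dftOmega_abs (n : ℕ) [NeZero n] : ‖dftOmega n‖ = 1 := by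
  have : dftOmega n = Complex.exp ((↑(2 * π / n) : ℂ) * Complex.I) := by
    rw [dftOmega]; push_cast; ring_nf
  rw [this, Complex.norm_exp_ofReal_mul_I]

lemma dftOmega_ne_zero (n : ℕ) [NeZero n] : dftOmega n ≠ 0 := Complex.exp_ne_zero _

end Aux

/-- The cyclic forward shift `τ(ξ)_j = ξ_{j−1}` is an isometry for the norm
`‖·‖_{F^p(ℤ_n)}`. -/
theorem stmt7 (n : ℕ) [NeZero n] (p : ℝ) (hp : 1 ≤ p) (ξ : ZMod n → ℂ) :
    FpNorm n p (fun j => ξ (j - 1)) = FpNorm n p ξ := by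
  classical
  set u := dftMatrix n with hu
  by_cases hdet : IsUnit u.det
  · set ω := dftOmega n with hω
    set d : ZMod n → ℂ := fun j => ω ^ j.val with hdef
    set e : ZMod n → ℂ := fun j => (ω ^ j.val)⁻¹ with hedef
    set T : Matrix (ZMod n) (ZMod n) ℂ :=
      Matrix.of (fun j k => if j = k - 1 then (1 : ℂ) else 0) with hT
    have hde : ∀ i, d i * e i = 1 := fun i =>
      mul_inv_cancel₀ (pow_ne_zero _ (dftOmega_ne_zero n))
    have hd1 : ∀ i, ‖d i‖ = 1 := fun i => by
      simp [hdef, norm_pow, hω, dftOmega_abs n]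
    -- u * T = diagonal e * u
    have h1 : u * T = Matrix.diagonal e * u := by
      ext j k
      rw [Matrix.mul_apply, Matrix.diagonal_mul]
      have : ∀ m : ZMod n, u j m * T m k = if m = k - 1 then u j (k - 1) else 0 := by
        intro m
        simp only [hT, Matrix.of_apply]
        split_ifs with h
        · subst h; ring
        · ring
      rw [Finset.sum_congr rfl (fun m _ => this m), Finset.sum_ite_eq' Finset.univ (k - 1),
        if_pos (Finset.mem_univ _)]
      show dftOmega n ^ (j.val * (k - 1).val) / _ = e j * (dftOmega n ^ (j.val * k.val) / _)
      have hcong : dftOmega n ^ (j.val * (k - 1).val + j.val) = dftOmega n ^ (j.val * k.val) := by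
        apply dftOmega_pow_congr
        have hz : ((j.val * (k - 1).val + j.val : ℕ) : ZMod n) = ((j.val * k.val : ℕ) : ZMod n) := by
          push_cast
          rw [ZMod.natCast_val, ZMod.natCast_val, ZMod.natCast_val]
          simp only [ZMod.cast_id]
          ring
        exact (ZMod.natCast_eq_natCast_iff' _ _ _).mp hz
      rw [hedef]
      have hsq : ((Real.sqrt n : ℝ) : ℂ) ≠ 0 := by
        simp only [ne_eq, Complex.ofReal_eq_zero]
        exact Real.sqrt_ne_zero'.mpr (by exact_mod_cast Nat.pos_of_ne_zero (NeZero.ne n))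
      have hωz : dftOmega n ^ j.val ≠ 0 := pow_ne_zero _ (dftOmega_ne_zero n)
      rw [pow_add] at hcong
      have hinv : dftOmega n ^ j.val * (dftOmega n)⁻¹ ^ j.val = 1 := by
        rw [← mul_pow, mul_inv_cancel₀ (dftOmega_ne_zero n), one_pow]
      field_simp
      linear_combination (dftOmega n)⁻¹ ^ j.val * hcong - dftOmega n ^ (j.val * (k - 1).val) * hinv
    -- diagonal ξ * T = T * diagonal (fun j => ξ (j - 1))
    have h2 : Matrix.diagonal ξ * T = T * Matrix.diagonal (fun j => ξ (j - 1)) := by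
      ext j k
      rw [Matrix.diagonal_mul, Matrix.mul_diagonal]
      simp only [hT, Matrix.of_apply]
      split_ifs with h
      · subst h; ring
      · ring
    have : Invertible u := u.invertibleOfIsUnitDet hdet
    have hvu : u⁻¹ * u = 1 := Matrix.nonsing_inv_mul u hdet
    have huv : u * u⁻¹ = 1 := Matrix.mul_nonsing_inv u hdet
    have hTv : T = u⁻¹ * (Matrix.diagonal e * u) := by
      rw [← h1, ← Matrix.mul_assoc, hvu, Matrix.one_mul]
    have h4 : T * u⁻¹ = u⁻¹ * Matrix.diagonal e := by
      rw [hTv, Matrix.mul_assoc, Matrix.mul_assoc, huv, Matrix.mul_one]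
    have hdd : Matrix.diagonal d * Matrix.diagonal e = 1 := by
      have h1' : (fun i => d i * e i) = (1 : ZMod n → ℂ) := funext hde
      rw [Matrix.diagonal_mul_diagonal, h1']; exact Matrix.diagonal_one
    have key : Matrix.diagonal d * (u * Matrix.diagonal ξ * u⁻¹) * Matrix.diagonal e =
        u * Matrix.diagonal (fun j => ξ (j - 1)) * u⁻¹ := by
      calc Matrix.diagonal d * (u * Matrix.diagonal ξ * u⁻¹) * Matrix.diagonal e
          = Matrix.diagonal d * (u * Matrix.diagonal ξ * (u⁻¹ * Matrix.diagonal e)) := by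
            simp only [Matrix.mul_assoc]
        _ = Matrix.diagonal d * (u * (Matrix.diagonal ξ * T) * u⁻¹) := by
            rw [← h4]; simp only [Matrix.mul_assoc]
        _ = Matrix.diagonal d * (u * T * (Matrix.diagonal (fun j => ξ (j - 1)) * u⁻¹)) := by
            rw [h2]; simp only [Matrix.mul_assoc]
        _ = Matrix.diagonal d * Matrix.diagonal e *
              (u * (Matrix.diagonal (fun j => ξ (j - 1)) * u⁻¹)) := by
            rw [h1]; simp only [Matrix.mul_assoc]
        _ = u * Matrix.diagonal (fun j => ξ (j - 1)) * u⁻¹ := by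
            rw [hdd, Matrix.one_mul, Matrix.mul_assoc]
    unfold FpNorm
    rw [← hu, ← key, opNormLp_conj p d e hd1 hde]
  · unfold FpNorm
    rw [← hu, Matrix.nonsing_inv_apply_not_isUnit u hdet, mul_zero, mul_zero]
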